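/- For all T > 0, λ ∈ (0,1], t ∈ [0,T] and integers 1 ≤ j ≤ ⌊t/λ⌋: 0 ≤ t^j/j! - C(⌊t/λ⌋, j) λ^j ≤ (T^j - (T - λj)^j)/j! ≤ λ j² T^{j-1}/j!, where C(m,j) is the binomial coefficient. -/

import Mathlib

open Finset in
lemma aux_diff_mono (c : ℝ) (hc : 0 ≤ c) {a b : ℝ} (hba : b ≤ a) (hcb : c ≤ b) (j : ℕ) :
    b ^ j - (b - c) ^ j ≤ a ^ j - (a - c) ^ j := by
  rw [← geom_sum₂_mul b (b - c) j, ← geom_sum₂_mul a (a - c) j]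
  have hab : a - (a - c) = c := by ring
  have hbb : b - (b - c) = c := by ring
  rw [hab, hbb]
  apply mul_le_mul_of_nonneg_right _ hc
  apply Finset.sum_le_sum
  intro i _
  have h1 : (0:ℝ) ≤ b - c := sub_nonneg.2 hcb
  exact mul_le_mul (pow_le_pow_left₀ (le_trans hc hcb) hba i)
    (pow_le_pow_left₀ h1 (by linarith) _) (pow_nonneg h1 _)
    (pow_nonneg (le_trans (le_trans hc hcb) hba) _)

theorem stmt_19 (T lam t : ℝ) (hT : 0 < T) (hlam0 : 0 < lam) (hlam1 : lam ≤ 1)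
    (ht0 : 0 ≤ t) (htT : t ≤ T) (j : ℕ) (hj1 : 1 ≤ j) (hj : j ≤ ⌊t / lam⌋₊) :
    0 ≤ t ^ j / (Nat.factorial j : ℝ) - ((⌊t / lam⌋₊).choose j : ℝ) * lam ^ j ∧
      t ^ j / (Nat.factorial j : ℝ) - ((⌊t / lam⌋₊).choose j : ℝ) * lam ^ j ≤
        (T ^ j - (T - lam * j) ^ j) / (Nat.factorial j : ℝ) ∧
      (T ^ j - (T - lam * j) ^ j) / (Nat.factorial j : ℝ) ≤
        lam * (j : ℝ) ^ 2 * T ^ (j - 1) / (Nat.factorial j : ℝ) := by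
  set m := ⌊t / lam⌋₊ with hm
  have hfac : (0:ℝ) < (Nat.factorial j : ℝ) := by positivity
  -- λ m ≤ t
  have hmt : lam * (m : ℝ) ≤ t := by
    have := Nat.floor_le (show (0:ℝ) ≤ t / lam from div_nonneg ht0 hlam0.le)
    rw [← hm] at this
    calc lam * (m : ℝ) ≤ lam * (t / lam) := by
          exact mul_le_mul_of_nonneg_left this hlam0.le
      _ = t := by field_simp
  -- t < λ (m+1)
  have htm : t < lam * ((m : ℝ) + 1) := by
    have := Nat.lt_floor_add_one (t / lam)
    rw [← hm] at this
    calc t = lam * (t / lam) := by field_simp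
      _ < lam * ((m : ℝ) + 1) := by
          exact mul_lt_mul_of_pos_left this hlam0
  have hjm : (j : ℝ) ≤ (m : ℝ) := by exact_mod_cast hj
  have hljt : lam * (j : ℝ) ≤ t := le_trans (by nlinarith) hmt
  have hljT : lam * (j : ℝ) ≤ T := le_trans hljt htT
  have hlj0 : 0 ≤ lam * (j : ℝ) := by positivity
  -- choose bounds
  have hdesc : (m.descFactorial j : ℝ) = (Nat.factorial j : ℝ) * (m.choose j : ℝ) := by
    exact_mod_cast congrArg (Nat.cast : ℕ → ℝ) (Nat.descFactorial_eq_factorial_mul_choose m j)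
  have hupper : (m.choose j : ℝ) * lam ^ j ≤ t ^ j / (Nat.factorial j : ℝ) := by
    rw [div_eq_inv_mul, ← mul_le_mul_iff_right₀ hfac, ← mul_assoc, ← hdesc, ← mul_assoc,
      mul_inv_cancel₀ hfac.ne', one_mul]
    have h1 : (m.descFactorial j : ℝ) ≤ (m : ℝ) ^ j := by
      exact_mod_cast Nat.descFactorial_le_pow m j
    calc (m.descFactorial j : ℝ) * lam ^ j ≤ (m : ℝ) ^ j * lam ^ j :=
          mul_le_mul_of_nonneg_right h1 (by positivity)
      _ = (lam * (m : ℝ)) ^ j := by rw [mul_pow]; ring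
      _ ≤ t ^ j := pow_le_pow_left₀ (by positivity) hmt j
  have hlower : (t - lam * j) ^ j / (Nat.factorial j : ℝ) ≤ (m.choose j : ℝ) * lam ^ j := by
    rw [div_le_iff₀ hfac]
    have h1 : ((m + 1 - j : ℕ) : ℝ) ^ j ≤ (m.descFactorial j : ℝ) := by
      exact_mod_cast Nat.pow_sub_le_descFactorial m j
    have hcast : ((m + 1 - j : ℕ) : ℝ) = (m : ℝ) + 1 - (j : ℝ) := by
      have : j ≤ m + 1 := le_trans hj (Nat.le_succ m)
      push_cast [this]; ring
    calc (t - lam * j) ^ j ≤ (lam * ((m : ℝ) + 1 - j)) ^ j := by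
          apply pow_le_pow_left₀ (by linarith)
          nlinarith
      _ = lam ^ j * ((m : ℝ) + 1 - (j:ℝ)) ^ j := by rw [mul_pow]
      _ ≤ lam ^ j * (m.descFactorial j : ℝ) := by
          apply mul_le_mul_of_nonneg_left _ (by positivity)
          rw [← hcast]; exact h1
      _ = (m.choose j : ℝ) * lam ^ j * (Nat.factorial j : ℝ) := by rw [hdesc]; ring
  refine ⟨by linarith [hupper], ?_, ?_⟩
  · have hmono : t ^ j - (t - lam * j) ^ j ≤ T ^ j - (T - lam * j) ^ j :=
      aux_diff_mono (lam * j) hlj0 htT hljt j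
    have h2 : (t ^ j - (t - lam * j) ^ j) / (Nat.factorial j : ℝ) ≤
        (T ^ j - (T - lam * j) ^ j) / (Nat.factorial j : ℝ) := by gcongr
    rw [sub_div] at h2
    linarith [hlower]
  · have hkey : T ^ j - (T - lam * j) ^ j ≤ lam * (j : ℝ) ^ 2 * T ^ (j - 1) := by
      rw [← geom_sum₂_mul T (T - lam * j) j]
      have h3 : T - (T - lam * j) = lam * j := by ring
      rw [h3]
      have hsum : (∑ i ∈ Finset.range j, T ^ i * (T - lam * j) ^ (j - 1 - i)) ≤
          (j : ℝ) * T ^ (j - 1) := by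
        calc (∑ i ∈ Finset.range j, T ^ i * (T - lam * j) ^ (j - 1 - i))
            ≤ ∑ i ∈ Finset.range j, T ^ (j - 1) := by
              apply Finset.sum_le_sum
              intro i hi
              have hi' : i < j := Finset.mem_range.mp hi
              calc T ^ i * (T - lam * j) ^ (j - 1 - i)
                  ≤ T ^ i * T ^ (j - 1 - i) := by
                    apply mul_le_mul_of_nonneg_left _ (by positivity)
                    exact pow_le_pow_left₀ (by linarith) (by linarith) _
                _ = T ^ (j - 1) := by
                    rw [← pow_add]
                    congr 1
                    omega
          _ = (j : ℝ) * T ^ (j - 1) := by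
              rw [Finset.sum_const, Finset.card_range, nsmul_eq_mul]
      calc (∑ i ∈ Finset.range j, T ^ i * (T - lam * j) ^ (j - 1 - i)) * (lam * j)
          ≤ (j : ℝ) * T ^ (j - 1) * (lam * j) := by
            apply mul_le_mul_of_nonneg_right hsum hlj0
        _ = lam * (j : ℝ) ^ 2 * T ^ (j - 1) := by ring
    gcongr
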